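/- (Classification in rank 2; the Effros–Shen case of Theorem 1(i).) Let α and β be irrational real numbers. The ordered groups G_α and G_β (subgroups of ℝ with the induced order) are order-isomorphic if and only if there exist integers a, b, c, d with ad − bc = ±1 and β = (aα + b)/(cα + d). -/

import Mathlib

/-- The additive subgroup `ℤα + ℤ = {mα + n : m, n ∈ ℤ}` of `ℝ`. -/
def Gsub (α : ℝ) : AddSubgroup ℝ where
  carrier := {x : ℝ | ∃ m n : ℤ, x = m * α + n}
  add_mem' := by
    rintro x y ⟨m, n, rfl⟩ ⟨m', n', rfl⟩
    exact ⟨m + m', n + n', by push_cast; ring⟩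
  zero_mem' := ⟨0, 0, by simp⟩
  neg_mem' := by
    rintro x ⟨m, n, rfl⟩
    exact ⟨-m, -n, by push_cast; ring⟩

lemma aux_lt (a b c d : ℝ) (hb : 0 < b) (hd : 0 < d)
    (h : ∀ m n : ℤ, m * a ≤ n * b → m * c ≤ n * d) (hlt : a / b < c / d) : False := by
  obtain ⟨q, hq1, hq2⟩ := exists_rat_btwn hlt
  set m : ℤ := (q.den : ℤ) with hm
  set n : ℤ := q.num with hn
  have hmR : (0 : ℝ) < (m : ℝ) := by
    rw [hm]; exact_mod_cast q.pos
  have hqe : (q : ℝ) = (n : ℝ) / (m : ℝ) := by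
    rw [hn, hm]; push_cast [Rat.cast_def]; norm_num
  have h1 : (m : ℝ) * a ≤ (n : ℝ) * b := by
    rw [hqe] at hq1
    have := (div_lt_div_iff₀ hb hmR).mp hq1
    nlinarith
  have h2 := h m n h1
  have : c / d ≤ (n : ℝ) / (m : ℝ) := by
    rw [div_le_div_iff₀ hd hmR]; nlinarith
  rw [hqe] at hq2; linarith

lemma real_key (a b c d : ℝ) (hb : 0 < b) (hd : 0 < d)
    (h : ∀ m n : ℤ, m * a ≤ n * b ↔ m * c ≤ n * d) : a * d = c * b := by
  have : a / b = c / d := by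
    rcases lt_trichotomy (a / b) (c / d) with hlt | he | hgt
    · exact absurd hlt (fun hl => aux_lt a b c d hb hd (fun m n hmn => (h m n).mp hmn) hl)
    · exact he
    · exact absurd hgt (fun hl => aux_lt c d a b hd hb (fun m n hmn => (h m n).mpr hmn) hl)
  field_simp at this
  linarith

lemma irr_coords {β : ℝ} (hβ : Irrational β) (m n : ℤ) (h : (m : ℝ) * β + n = 0) :
    m = 0 ∧ n = 0 := by
  rcases eq_or_ne m 0 with hm | hm
  · subst hm; simp at h; exact ⟨rfl, by exact_mod_cast h⟩
  · exfalso
    have hmR : (m : ℝ) ≠ 0 := Int.cast_ne_zero.mpr hm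
    have : β = ((-n : ℚ) / (m : ℚ) : ℚ) := by
      push_cast
      field_simp
      linarith
    exact hβ ⟨_, this.symm⟩

noncomputable def oneG (α : ℝ) : Gsub α := ⟨1, 0, 1, by push_cast; ring⟩

lemma phi_pos {α β : ℝ} (φ : Gsub α ≃+ Gsub β)
    (hφ : ∀ x y : Gsub α, x ≤ y ↔ φ x ≤ φ y) : 0 < ((φ (oneG α) : ℝ)) := by
  have h0 : (0 : Gsub α) < oneG α := by
    rw [← Subtype.coe_lt_coe]; norm_num [oneG]
  have : φ 0 < φ (oneG α) := by
    rw [lt_iff_le_not_ge, ← hφ, ← hφ, ← lt_iff_le_not_ge]; exact h0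
  rw [map_zero] at this
  exact_mod_cast this

lemma phi_linear {α β : ℝ} (φ : Gsub α ≃+ Gsub β)
    (hφ : ∀ x y : Gsub α, x ≤ y ↔ φ x ≤ φ y) (x : Gsub α) :
    (φ x : ℝ) = (φ (oneG α) : ℝ) * x := by
  have hL := phi_pos φ hφ
  have key : ∀ m n : ℤ, (m : ℝ) * (x : ℝ) ≤ (n : ℝ) * 1 ↔
      (m : ℝ) * (φ x : ℝ) ≤ (n : ℝ) * (φ (oneG α) : ℝ) := by
    intro m n
    have h1 : ((m • x : Gsub α) : ℝ) = (m : ℝ) * (x : ℝ) := by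
      push_cast [zsmul_eq_mul]; ring
    have h2 : ((n • oneG α : Gsub α) : ℝ) = (n : ℝ) * 1 := by
      push_cast [oneG, zsmul_eq_mul]; ring
    have h3 : ((φ (m • x) : ℝ)) = (m : ℝ) * (φ x : ℝ) := by
      rw [map_zsmul]; push_cast [zsmul_eq_mul]; ring
    have h4 : ((φ (n • oneG α) : ℝ)) = (n : ℝ) * (φ (oneG α) : ℝ) := by
      rw [map_zsmul]; push_cast [zsmul_eq_mul]; ring
    rw [← h1, ← h2, ← h3, ← h4, Subtype.coe_le_coe, Subtype.coe_le_coe]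
    exact hφ _ _
  have := real_key (x : ℝ) 1 (φ x : ℝ) (φ (oneG α) : ℝ) one_pos hL key
  nlinarith [this]

lemma mk_iso {α β : ℝ} (k : ℝ) (hk : 0 < k)
    (h1 : ∀ x ∈ Gsub α, k * x ∈ Gsub β)
    (h2 : ∀ y ∈ Gsub β, k⁻¹ * y ∈ Gsub α) :
    ∃ φ : Gsub α ≃+ Gsub β, ∀ x y : Gsub α, x ≤ y ↔ φ x ≤ φ y := by
  have hk0 : k ≠ 0 := ne_of_gt hk
  refine ⟨{ toFun := fun x => ⟨k * x, h1 _ x.2⟩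
            invFun := fun y => ⟨k⁻¹ * y, h2 _ y.2⟩
            left_inv := by intro x; ext; field_simp
            right_inv := by intro y; ext; field_simp
            map_add' := by intro x y; ext; push_cast; ring }, ?_⟩
  intro x y
  simp only [AddEquiv.coe_mk, Equiv.coe_fn_mk]
  rw [← Subtype.coe_le_coe, ← Subtype.coe_le_coe]
  exact (mul_le_mul_iff_right₀ hk).symm

/-- Effros–Shen classification: `G_α` and `G_β` (with the order induced from `ℝ`)
are order isomorphic iff `α` and `β` are `GL(2,ℤ)`-equivalent. -/
theorem stmt_9 (α β : ℝ) (hα : Irrational α) (hβ : Irrational β) :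
    (∃ φ : Gsub α ≃+ Gsub β, ∀ x y : Gsub α, x ≤ y ↔ φ x ≤ φ y) ↔
    (∃ a b c d : ℤ, (a * d - b * c = 1 ∨ a * d - b * c = -1) ∧
      β = (a * α + b) / (c * α + d)) := by
  constructor
  · rintro ⟨φ, hφ⟩
    set L : ℝ := (φ (oneG α) : ℝ) with hLdef
    have hL : 0 < L := phi_pos φ hφ
    set ψ := φ.symm with hψdef
    have hψ : ∀ x y : Gsub β, x ≤ y ↔ ψ x ≤ ψ y := by
      intro x y
      conv_lhs => rw [← φ.apply_symm_apply x, ← φ.apply_symm_apply y]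
      exact (hφ _ _).symm
    set M : ℝ := (ψ (oneG β) : ℝ) with hMdef
    have hM : 0 < M := phi_pos ψ hψ
    -- coordinates
    have alphaA : Gsub α := ⟨α, 1, 0, by push_cast; ring⟩
    obtain ⟨a, b, hab⟩ := (φ ⟨α, 1, 0, by push_cast; ring⟩).2
    obtain ⟨c, d, hcd⟩ := (φ (oneG α)).2
    obtain ⟨p, q, hpq⟩ := (ψ ⟨β, 1, 0, by push_cast; ring⟩).2
    obtain ⟨r, s, hrs⟩ := (ψ (oneG β)).2
    have hA : L * α = a * β + b := by
      rw [← hab, phi_linear φ hφ]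
    have hC : L = c * β + d := by rw [← hcd, hLdef]
    have hP : M * β = p * α + q := by
      rw [← hpq, phi_linear ψ hψ]
    have hR : M = r * α + s := by rw [← hrs, hMdef]
    have hLM : L * M = 1 := by
      have h1 : (φ (ψ (oneG β)) : ℝ) = L * M := by
        rw [phi_linear φ hφ, ← hMdef]
      rw [φ.apply_symm_apply] at h1
      simp [oneG] at h1
      linarith
    -- derive integer relations
    have e1 : p * a + q * c = 1 ∧ p * b + q * d = 0 := by
      have : ((p * a + q * c - 1 : ℤ) : ℝ) * β + ((p * b + q * d : ℤ) : ℝ) = 0 := by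
        push_cast
        linear_combination (-(p:ℝ)) * hA + (-(q:ℝ)) * hC + (-L) * hP + β * hLM
      obtain ⟨h1, h2⟩ := irr_coords hβ _ _ this
      constructor <;> omega
    have e2 : r * a + s * c = 0 ∧ r * b + s * d = 1 := by
      have : ((r * a + s * c : ℤ) : ℝ) * β + ((r * b + s * d - 1 : ℤ) : ℝ) = 0 := by
        push_cast
        linear_combination (-(r:ℝ)) * hA + (-(s:ℝ)) * hC + (-L) * hR + hLM
      obtain ⟨h1, h2⟩ := irr_coords hβ _ _ this
      constructor <;> omega
    obtain ⟨e11, e12⟩ := e1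
    obtain ⟨e21, e22⟩ := e2
    have hdet : (p * s - q * r) * (a * d - b * c) = 1 := by
      calc (p * s - q * r) * (a * d - b * c)
          = (p * a + q * c) * (r * b + s * d) - (p * b + q * d) * (r * a + s * c) := by ring
        _ = 1 := by rw [e11, e12, e21, e22]; ring
    refine ⟨p, q, r, s, ?_, ?_⟩
    · have : IsUnit (p * s - q * r) := IsUnit.of_mul_eq_one _ hdet
      rcases Int.isUnit_iff.mp this with h | h
      · left; exact h
      · right; exact h
    · have hMne : (r : ℝ) * α + s ≠ 0 := by rw [← hR]; exact ne_of_gt hM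
      rw [eq_div_iff hMne, ← hR, ← hP, mul_comm]
  · rintro ⟨a, b, c, d, hdet, hβe⟩
    have hΔ2 : (a * d - b * c) * (a * d - b * c) = 1 := by
      rcases hdet with h | h <;> rw [h] <;> norm_num
    set t : ℝ := c * α + d with ht
    have htne : t ≠ 0 := by
      intro h0
      rcases eq_or_ne c 0 with hc | hc
      · have : (d : ℝ) = 0 := by simpa [ht, hc] using h0
        have hd0 : d = 0 := by exact_mod_cast this
        rw [hc, hd0] at hdet; simp at hdet
      · exact hα ⟨(-d : ℚ) / (c : ℚ), by
          push_cast
          have hcR : (c : ℝ) ≠ 0 := Int.cast_ne_zero.mpr hc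
          field_simp
          linarith [h0]⟩
    have hβt : β * t = a * α + b := by
      rw [hβe, ht, div_mul_cancel₀]
      exact htne
    have mem1 : ∀ x ∈ Gsub α, x / t ∈ Gsub β := by
      rintro x ⟨m, n, rfl⟩
      refine ⟨(a * d - b * c) * (m * d - n * c), (a * d - b * c) * (n * a - m * b), ?_⟩
      have hMa : (a * d - b * c) * (m * d - n * c) * a + (a * d - b * c) * (n * a - m * b) * c = m := by
        have : (a * d - b * c) * (m * d - n * c) * a + (a * d - b * c) * (n * a - m * b) * c = m * ((a * d - b * c) * (a * d - b * c)) := by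
          ring
        rw [this, hΔ2]; ring
      have hMb : (a * d - b * c) * (m * d - n * c) * b + (a * d - b * c) * (n * a - m * b) * d = n := by
        have : (a * d - b * c) * (m * d - n * c) * b + (a * d - b * c) * (n * a - m * b) * d = n * ((a * d - b * c) * (a * d - b * c)) := by
          ring
        rw [this, hΔ2]; ring
      rw [div_eq_iff htne]
      have expand : (((a * d - b * c) * (m * d - n * c) : ℤ) * β + ((a * d - b * c) * (n * a - m * b) : ℤ)) * t
          = (((a * d - b * c) * (m * d - n * c) * a + (a * d - b * c) * (n * a - m * b) * c : ℤ) : ℝ) * α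
            + (((a * d - b * c) * (m * d - n * c) * b + (a * d - b * c) * (n * a - m * b) * d : ℤ) : ℝ) := by
        push_cast
        rw [ht]
        linear_combination (((a * d - b * c) : ℝ) * (m * d - n * c)) * hβt
      rw [expand, hMa, hMb]
    have mem2 : ∀ y ∈ Gsub β, y * t ∈ Gsub α := by
      rintro y ⟨M, N, rfl⟩
      refine ⟨M * a + N * c, M * b + N * d, ?_⟩
      push_cast
      rw [ht]
      linear_combination (M : ℝ) * hβt
    rcases lt_or_gt_of_ne htne with hneg | hpos
    · apply mk_iso (-t⁻¹) (neg_pos.mpr (inv_lt_zero.mpr hneg))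
      · intro x hx
        have : -t⁻¹ * x = -(x / t) := by field_simp
        rw [this]
        exact (Gsub β).neg_mem (mem1 x hx)
      · intro y hy
        have : (-t⁻¹)⁻¹ * y = (-y) * t := by rw [inv_neg, inv_inv]; ring
        rw [this]
        exact mem2 _ ((Gsub β).neg_mem hy)
    · apply mk_iso t⁻¹ (inv_pos.mpr hpos)
      · intro x hx
        have : t⁻¹ * x = x / t := by field_simp
        rw [this]
        exact mem1 x hx
      · intro y hy
        have : (t⁻¹)⁻¹ * y = y * t := by rw [inv_inv]; ring
        rw [this]
        exact mem2 y hy
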